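/- Let a,b,c ≥ 1 be integers and let P = {γ ∈ ℝ_{≥0}^3 : aγ_1+γ_2 ≤ 1, bγ_2+γ_3 ≤ 1, cγ_3 ≤ 1}. Then P equals the convex hull of the eight points (0,0,0), (1/a,0,0), (1/a,0,1/c), (0,0,1/c), (0,(c−1)/(bc),1/c), ((bc−c+1)/(abc),(c−1)/(bc),1/c), (0,1/b,0), and ((b−1)/(ab),1/b,0). -/

import Mathlib

set_option maxHeartbeats 4000000 in
/-- The splitting polytope `{γ ∈ ℝ_{≥0}^3 : aγ₁+γ₂ ≤ 1, bγ₂+γ₃ ≤ 1, cγ₃ ≤ 1}` of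
the mapping `(x^a + x y^b, y z^c)` (integers `a,b,c ≥ 1`) is the convex hull of
the eight listed points. -/
theorem stmt9 (a b c : ℕ) (ha : 1 ≤ a) (hb : 1 ≤ b) (hc : 1 ≤ c) :
    {γ : ℝ × ℝ × ℝ | 0 ≤ γ.1 ∧ 0 ≤ γ.2.1 ∧ 0 ≤ γ.2.2 ∧
      (a:ℝ) * γ.1 + γ.2.1 ≤ 1 ∧ (b:ℝ) * γ.2.1 + γ.2.2 ≤ 1 ∧ (c:ℝ) * γ.2.2 ≤ 1} =
    convexHull ℝ
      ({((0:ℝ), (0:ℝ), (0:ℝ)),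
        (1 / (a:ℝ), 0, 0),
        (1 / (a:ℝ), 0, 1 / (c:ℝ)),
        (0, 0, 1 / (c:ℝ)),
        (0, ((c:ℝ) - 1) / ((b:ℝ) * c), 1 / (c:ℝ)),
        (((b:ℝ) * c - c + 1) / ((a:ℝ) * b * c), ((c:ℝ) - 1) / ((b:ℝ) * c), 1 / (c:ℝ)),
        (0, 1 / (b:ℝ), 0),
        (((b:ℝ) - 1) / ((a:ℝ) * b), 1 / (b:ℝ), 0)} : Set (ℝ × ℝ × ℝ)) := by
  have ha1 : (1:ℝ) ≤ a := by exact_mod_cast ha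
  have hb1 : (1:ℝ) ≤ b := by exact_mod_cast hb
  have hc1 : (1:ℝ) ≤ c := by exact_mod_cast hc
  have ha0 : (0:ℝ) < a := by linarith
  have hb0 : (0:ℝ) < b := by linarith
  have hc0 : (0:ℝ) < c := by linarith
  apply Set.Subset.antisymm
  · -- hard direction
    rintro ⟨x, y, z⟩ ⟨hx, hy, hz, h1, h2, h3⟩
    set S : Set (ℝ × ℝ × ℝ) :=
        ({((0:ℝ), (0:ℝ), (0:ℝ)),
          (1 / (a:ℝ), 0, 0),
          (1 / (a:ℝ), 0, 1 / (c:ℝ)),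
          (0, 0, 1 / (c:ℝ)),
          (0, ((c:ℝ) - 1) / ((b:ℝ) * c), 1 / (c:ℝ)),
          (((b:ℝ) * c - c + 1) / ((a:ℝ) * b * c), ((c:ℝ) - 1) / ((b:ℝ) * c), 1 / (c:ℝ)),
          (0, 1 / (b:ℝ), 0),
          (((b:ℝ) - 1) / ((a:ℝ) * b), 1 / (b:ℝ), 0)} : Set (ℝ × ℝ × ℝ)) with hS
    -- basic bounds
    have hz1 : z ≤ 1 := by nlinarith
    have hy1 : y ≤ 1 := by nlinarith
    obtain ⟨t, htdef⟩ : ∃ t : ℝ, t = c * z := ⟨_, rfl⟩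
    obtain ⟨s, hsdef⟩ : ∃ s : ℝ, s = b * y / (1 - z) := ⟨_, rfl⟩
    obtain ⟨l, hldef⟩ : ∃ l : ℝ, l = a * x / (1 - y) := ⟨_, rfl⟩
    have ht0 : 0 ≤ t := by rw [htdef]; positivity
    have ht1 : t ≤ 1 := by rw [htdef]; exact h3
    have hs0 : 0 ≤ s := hsdef ▸ div_nonneg (by positivity) (by linarith)
    have hl0 : 0 ≤ l := hldef ▸ div_nonneg (by positivity) (by linarith)
    have hs1 : s ≤ 1 := by
      rcases eq_or_lt_of_le hz1 with h | h
      · rw [hsdef, h]; norm_num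
      · rw [hsdef]; exact (div_le_one (by linarith)).mpr (by linarith)
    have hl1 : l ≤ 1 := by
      rcases eq_or_lt_of_le hy1 with h | h
      · rw [hldef, h]; norm_num
      · rw [hldef]; exact (div_le_one (by linarith)).mpr (by linarith)
    -- key identities
    have hst : s * (1 - z) = b * y := by
      rcases eq_or_lt_of_le hz1 with h | h
      · have hy0 : y = 0 := by nlinarith
        rw [hsdef, h, hy0]; norm_num
      · rw [hsdef]
        exact div_mul_cancel₀ _ (show (0:ℝ) < 1 - z by linarith).ne'
    have hlt : l * (1 - y) = a * x := by
      rcases eq_or_lt_of_le hy1 with h | h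
      · have hx0 : x = 0 := by nlinarith
        rw [hldef, h, hx0]; norm_num
      · rw [hldef]
        exact div_mul_cancel₀ _ (show (0:ℝ) < 1 - y by linarith).ne'
    -- membership of the eight vertices
    have hch := convex_convexHull ℝ S
    have m1 : ((0:ℝ),(0:ℝ),(0:ℝ)) ∈ convexHull ℝ S := subset_convexHull ℝ S (by simp [hS])
    have m2 : (1/(a:ℝ), (0:ℝ), (0:ℝ)) ∈ convexHull ℝ S := subset_convexHull ℝ S (by simp [hS])
    have m3 : (1/(a:ℝ), (0:ℝ), 1/(c:ℝ)) ∈ convexHull ℝ S := subset_convexHull ℝ S (by simp [hS])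
    have m4 : ((0:ℝ), (0:ℝ), 1/(c:ℝ)) ∈ convexHull ℝ S := subset_convexHull ℝ S (by simp [hS])
    have m5 : ((0:ℝ), ((c:ℝ)-1)/((b:ℝ)*c), 1/(c:ℝ)) ∈ convexHull ℝ S := subset_convexHull ℝ S (by simp [hS])
    have m6 : (((b:ℝ)*c-c+1)/((a:ℝ)*b*c), ((c:ℝ)-1)/((b:ℝ)*c), 1/(c:ℝ)) ∈ convexHull ℝ S :=
      subset_convexHull ℝ S (by simp [hS])
    have m7 : ((0:ℝ), 1/(b:ℝ), (0:ℝ)) ∈ convexHull ℝ S := subset_convexHull ℝ S (by simp [hS])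
    have m8 : (((b:ℝ)-1)/((a:ℝ)*b), 1/(b:ℝ), (0:ℝ)) ∈ convexHull ℝ S := subset_convexHull ℝ S (by simp [hS])
    have hll : (1 - l) + l = 1 := by ring
    have hss : (1 - s) + s = 1 := by ring
    have htt : (1 - t) + t = 1 := by ring
    have hl0' : 0 ≤ 1 - l := by linarith
    have hs0' : 0 ≤ 1 - s := by linarith
    have ht0' : 0 ≤ 1 - t := by linarith
    have A0 := hch m1 m2 hl0' hl0 hll
    have A1 := hch m7 m8 hl0' hl0 hll
    have B0 := hch m4 m3 hl0' hl0 hll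
    have B1 := hch m5 m6 hl0' hl0 hll
    have A := hch A0 A1 hs0' hs0 hss
    have B := hch B0 B1 hs0' hs0 hss
    have F := hch A B ht0' ht0 htt
    have key : (x, y, z) =
        (1 - t) • ((1 - s) • ((1 - l) • ((0:ℝ),(0:ℝ),(0:ℝ)) + l • (1/(a:ℝ), (0:ℝ), (0:ℝ))) +
          s • ((1 - l) • ((0:ℝ), 1/(b:ℝ), (0:ℝ)) + l • (((b:ℝ)-1)/((a:ℝ)*b), 1/(b:ℝ), (0:ℝ)))) +
        t • ((1 - s) • ((1 - l) • ((0:ℝ), (0:ℝ), 1/(c:ℝ)) + l • (1/(a:ℝ), (0:ℝ), 1/(c:ℝ))) +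
          s • ((1 - l) • ((0:ℝ), ((c:ℝ)-1)/((b:ℝ)*c), 1/(c:ℝ)) +
            l • (((b:ℝ)*c-c+1)/((a:ℝ)*b*c), ((c:ℝ)-1)/((b:ℝ)*c), 1/(c:ℝ)))) := by
      simp only [Prod.smul_mk, Prod.mk_add_mk, smul_eq_mul, Prod.mk.injEq]
      refine ⟨?_, ?_, ?_⟩
      · field_simp
        linear_combination (-1:ℝ) *
          (((b:ℝ)*c)*hlt - (l*(c:ℝ))*hst + (l*s)*htdef)
      · field_simp
        linear_combination -(c:ℝ)*hst + s*htdef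
      · field_simp
        linear_combination -htdef
    rw [key]
    exact F
  · -- easy direction
    apply convexHull_min
    · intro p hp
      simp only [Set.mem_insert_iff, Set.mem_singleton_iff] at hp
      rcases hp with rfl|rfl|rfl|rfl|rfl|rfl|rfl|rfl <;>
        refine ⟨?_, ?_, ?_, ?_, ?_, ?_⟩ <;>
        simp only [Set.mem_setOf_eq] <;>
        first
          | positivity
          | (apply div_nonneg <;>
              nlinarith [mul_nonneg (sub_nonneg.mpr hb1) hc0.le,
                mul_pos (mul_pos ha0 hb0) hc0])
          | (rw [mul_one_div, div_self ha0.ne'] <;> norm_num)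
          | (rw [mul_one_div, div_self hb0.ne'] <;> norm_num)
          | (rw [mul_one_div, div_self hc0.ne'] <;> norm_num)
          | (rw [div_le_one (by positivity)]; nlinarith)
          | (rw [mul_one_div, div_le_one (by positivity)]; nlinarith)
          | (field_simp; rw [div_le_one (by positivity)]; nlinarith)
          | (field_simp; nlinarith)
          | nlinarith
    · intro p hp q hq u v hu hv huv
      simp only [Set.mem_setOf_eq] at hp hq ⊢
      obtain ⟨hp1, hp2, hp3, hp4, hp5, hp6⟩ := hp
      obtain ⟨hq1, hq2, hq3, hq4, hq5, hq6⟩ := hq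
      have e1 : (u • p + v • q).1 = u * p.1 + v * q.1 := rfl
      have e2 : (u • p + v • q).2.1 = u * p.2.1 + v * q.2.1 := rfl
      have e3 : (u • p + v • q).2.2 = u * p.2.2 + v * q.2.2 := rfl
      rw [e1, e2, e3]
      refine ⟨?_, ?_, ?_, ?_, ?_, ?_⟩ <;>
        nlinarith [mul_nonneg hu hp1, mul_nonneg hv hq1, mul_nonneg hu hp2,
          mul_nonneg hv hq2, mul_nonneg hu hp3, mul_nonneg hv hq3]
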